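/- Let F be an intersecting family of subsets of a finite set contained in C = downset generated by F, with F ⊆ st_C(a) ∪ st_C(b), and suppose neither st_C(a) nor st_C(b) contains F. Then there exists an intersecting family F' ⊆ C with F' ⊆ st_C(a) ∪ st_C(b) such that either |F'| > |F|, or |F'| = |F| and the sum of the sizes of the members of F' is strictly smaller than that of F. -/

import Mathlib

namespace Stmt2Aux


variable {α : Type*} [DecidableEq α]

/-- total size of a family -/
def famSize (𝓕 : Finset (Finset α)) : ℕ := ∑ X ∈ 𝓕, X.card

/-- members avoiding z -/
def fam0 (z : α) (H : Finset (Finset α)) : Finset (Finset α) :=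
  H.filter (fun X => z ∉ X)

/-- links at z, as subsets of g -/
def fam1 (z : α) (g : Finset α) (H : Finset (Finset α)) : Finset (Finset α) :=
  g.powerset.filter (fun X => insert z X ∈ H)

lemma mem_fam0 {z : α} {H : Finset (Finset α)} {X : Finset α} :
    X ∈ fam0 z H ↔ X ∈ H ∧ z ∉ X := by simp [fam0]

lemma mem_fam1 {z : α} {g : Finset α} {H : Finset (Finset α)} {X : Finset α} :
    X ∈ fam1 z g H ↔ X ⊆ g ∧ insert z X ∈ H := by simp [fam1]

lemma subset_of_not_mem {z : α} {g X : Finset α} (hX : X ⊆ insert z g) (hz : z ∉ X) :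
    X ⊆ g := by
  intro x hx
  rcases Finset.mem_insert.mp (hX hx) with h | h
  · exact absurd (h ▸ hx) hz
  · exact h

lemma erase_mem_fam1 {z : α} {g : Finset α} {H : Finset (Finset α)}
    (hH : ∀ X ∈ H, X ⊆ insert z g) {X : Finset α}
    (hX : X ∈ H.filter (fun X => z ∈ X)) : X.erase z ∈ fam1 z g H := by
  rw [Finset.mem_filter] at hX
  rw [mem_fam1]
  refine ⟨subset_of_not_mem (fun x hx => hH X hX.1 (Finset.mem_of_mem_erase hx))
      (Finset.notMem_erase z X), ?_⟩
  rw [Finset.insert_erase hX.2]; exact hX.1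

lemma insert_mem_filter {z : α} {g : Finset α} {H : Finset (Finset α)}
    {X : Finset α} (hX : X ∈ fam1 z g H) :
    insert z X ∈ H.filter (fun X => z ∈ X) := by
  rw [mem_fam1] at hX
  rw [Finset.mem_filter]
  exact ⟨hX.2, Finset.mem_insert_self z X⟩

lemma card_decomp (z : α) (g : Finset α) (hz : z ∉ g) (H : Finset (Finset α))
    (hH : ∀ X ∈ H, X ⊆ insert z g) :
    H.card = (fam0 z H).card + (fam1 z g H).card := by
  have h2 : (H.filter (fun X => z ∈ X)).card = (fam1 z g H).card := by
    refine Finset.card_bij' (fun X _ => X.erase z) (fun X _ => insert z X)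
      (fun X hX => erase_mem_fam1 hH hX) (fun X hX => insert_mem_filter hX) ?_ ?_
    · intro X hX
      rw [Finset.mem_filter] at hX
      exact Finset.insert_erase hX.2
    · intro X hX
      rw [mem_fam1] at hX
      exact Finset.erase_insert (fun h => hz (hX.1 h))
  have h1 := Finset.card_filter_add_card_filter_not (s := H)
      (p := fun X => z ∈ X)
  simp only [fam0]
  omega

lemma size_decomp (z : α) (g : Finset α) (hz : z ∉ g) (H : Finset (Finset α))
    (hH : ∀ X ∈ H, X ⊆ insert z g) :
    famSize H = famSize (fam0 z H) + famSize (fam1 z g H) + (fam1 z g H).card := by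
  have h2 : ∑ X ∈ H.filter (fun X => z ∈ X), X.card
      = ∑ X ∈ fam1 z g H, (X.card + 1) := by
    refine Finset.sum_bij' (fun X _ => X.erase z) (fun X _ => insert z X)
      (fun X hX => erase_mem_fam1 hH hX) (fun X hX => insert_mem_filter hX) ?_ ?_ ?_
    · intro X hX
      rw [Finset.mem_filter] at hX
      exact Finset.insert_erase hX.2
    · intro X hX
      rw [mem_fam1] at hX
      exact Finset.erase_insert (fun h => hz (hX.1 h))
    · intro X hX
      rw [Finset.mem_filter] at hX
      rw [Finset.card_erase_of_mem hX.2]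
      have : 1 ≤ X.card := Finset.card_pos.mpr ⟨z, hX.2⟩
      omega
  have h1 := Finset.sum_filter_add_sum_filter_not H (fun X => z ∈ X) (fun X => X.card)
  rw [Finset.sum_add_distrib, Finset.sum_const, smul_eq_mul, mul_one] at h2
  simp only [famSize, fam0]
  omega

variable {α : Type*} [DecidableEq α]
/-- downset over ground g -/
def IsDown (g : Finset α) (D : Finset (Finset α)) : Prop :=
  (∀ X ∈ D, X ⊆ g) ∧ ∀ X ∈ D, ∀ Y, Y ⊆ X → Y ∈ D

/-- upset over ground g -/
def IsUp (g : Finset α) (U : Finset (Finset α)) : Prop :=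
  (∀ X ∈ U, X ⊆ g) ∧ ∀ X ∈ U, ∀ Y, X ⊆ Y → Y ⊆ g → Y ∈ U

lemma down_fam0 {z : α} {g : Finset α} (hz : z ∉ g) {D : Finset (Finset α)}
    (hD : IsDown (insert z g) D) : IsDown g (fam0 z D) := by
  constructor
  · intro X hX
    rw [mem_fam0] at hX
    exact subset_of_not_mem (hD.1 X hX.1) hX.2
  · intro X hX Y hY
    rw [mem_fam0] at hX ⊢
    exact ⟨hD.2 X hX.1 Y hY, fun h => hX.2 (hY h)⟩

lemma down_fam1 {z : α} {g : Finset α} {D : Finset (Finset α)}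
    (hD : IsDown (insert z g) D) : IsDown g (fam1 z g D) := by
  constructor
  · intro X hX; exact (mem_fam1.mp hX).1
  · intro X hX Y hY
    rw [mem_fam1] at hX ⊢
    exact ⟨hY.trans hX.1, hD.2 _ hX.2 _ (Finset.insert_subset_insert z hY)⟩

lemma fam1_subset_fam0 {z : α} {g : Finset α} (hz : z ∉ g) {D : Finset (Finset α)}
    (hD : IsDown (insert z g) D) : fam1 z g D ⊆ fam0 z D := by
  intro X hX
  rw [mem_fam1] at hX
  rw [mem_fam0]
  exact ⟨hD.2 _ hX.2 _ (Finset.subset_insert z X), fun h => hz (hX.1 h)⟩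

lemma up_fam0 {z : α} {g : Finset α} (hz : z ∉ g) {U : Finset (Finset α)}
    (hU : IsUp (insert z g) U) : IsUp g (fam0 z U) := by
  constructor
  · intro X hX
    rw [mem_fam0] at hX
    exact subset_of_not_mem (hU.1 X hX.1) hX.2
  · intro X hX Y hXY hYg
    rw [mem_fam0] at hX ⊢
    exact ⟨hU.2 X hX.1 Y hXY (hYg.trans (Finset.subset_insert z g)), fun h => hz (hYg h)⟩

lemma up_fam1 {z : α} {g : Finset α} {U : Finset (Finset α)}
    (hU : IsUp (insert z g) U) : IsUp g (fam1 z g U) := by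
  constructor
  · intro X hX; exact (mem_fam1.mp hX).1
  · intro X hX Y hXY hYg
    rw [mem_fam1] at hX ⊢
    exact ⟨hYg, hU.2 _ hX.2 _ (Finset.insert_subset_insert z hXY)
      (Finset.insert_subset_insert z hYg)⟩

lemma fam0_subset_fam1 {z : α} {g : Finset α} (hz : z ∉ g) {U : Finset (Finset α)}
    (hU : IsUp (insert z g) U) : fam0 z U ⊆ fam1 z g U := by
  intro X hX
  rw [mem_fam0] at hX
  rw [mem_fam1]
  have hXg : X ⊆ g := subset_of_not_mem (hU.1 X hX.1) hX.2
  exact ⟨hXg, hU.2 X hX.1 _ (Finset.subset_insert z X) (Finset.insert_subset_insert z hXg)⟩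

lemma fam0_inter (z : α) (D U : Finset (Finset α)) :
    fam0 z (D ∩ U) = fam0 z D ∩ fam0 z U := by
  ext X; simp [mem_fam0, Finset.mem_inter]; tauto

lemma fam1_inter (z : α) (g : Finset α) (D U : Finset (Finset α)) :
    fam1 z g (D ∩ U) = fam1 z g D ∩ fam1 z g U := by
  ext X; simp [mem_fam1, Finset.mem_inter]; tauto

-- pure arithmetic helpers
lemma nat1 (m0 m1 d0 d1 u0 u1 P : ℕ) (h0 : m0*P ≤ d0*u0) (h1 : m1*P ≤ d1*u1)
    (hd : d1 ≤ d0) (hu : u0 ≤ u1) : (m0+m1)*(2*P) ≤ (d0+d1)*(u0+u1) := by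
  obtain ⟨x, rfl⟩ := Nat.exists_eq_add_of_le hd
  obtain ⟨y, rfl⟩ := Nat.exists_eq_add_of_le hu
  nlinarith

lemma nat2 (m0 m1 d0 d1 u0 u1 P : ℕ) (h0 : m0*P ≤ d0*u0) (h1 : m1*P ≤ d1*u1)
    (hd : d1 ≤ d0) (hu : u0 ≤ u1) (heq : (m0+m1)*(2*P) = (d0+d1)*(u0+u1)) :
    m0*P = d0*u0 ∧ m1*P = d1*u1 ∧ (d0 = d1 ∨ u0 = u1) := by
  obtain ⟨x, rfl⟩ := Nat.exists_eq_add_of_le hd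
  obtain ⟨y, rfl⟩ := Nat.exists_eq_add_of_le hu
  have hxy : x*y = 0 := by nlinarith
  refine ⟨by nlinarith, by nlinarith, ?_⟩
  rcases Nat.mul_eq_zero.mp hxy with h | h
  · left; omega
  · right; omega

lemma nat3 (S0 S1 T0 T1 m1 d1 u0 u1 P : ℕ) (hS0 : S0*u0 ≤ T0*P) (hS1 : S1*u1 ≤ T1*P)
    (he1 : m1*P = d1*u1) (hu : u0 = u1) :
    (S0+S1+d1)*(u0+u1) ≤ (T0+T1+m1)*(2*P) := by subst hu; nlinarith

lemma nat4 (S0 S1 T0 T1 m1 d1 u0 u1 P : ℕ) (hS0 : S0*u0 ≤ T0*P) (hS1 : S1*u1 ≤ T1*P)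
    (he1 : m1*P = d1*u1) (hS : S1 = S0) (hu : u0 ≤ u1) :
    (S0+S1+d1)*(u0+u1) ≤ (T0+T1+m1)*(2*P) := by
  subst hS
  have := Nat.mul_le_mul_left d1 hu
  nlinarith

lemma nat5 (S0 S1 T0 T1 m1 d1 u0 u1 P : ℕ) (hS0 : S0*u0 < T0*P) (hS1 : S1*u1 ≤ T1*P)
    (he1 : m1*P = d1*u1) (hu : u0 = u1) :
    (S0+S1+d1)*(u0+u1) < (T0+T1+m1)*(2*P) := by subst hu; nlinarith

lemma nat6 (S0 S1 T0 T1 m1 d1 u0 u1 P : ℕ) (hS0 : S0*u0 ≤ T0*P) (hS1 : S1*u1 ≤ T1*P)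
    (he1 : m1*P = d1*u1) (hS : S1 = S0) (hu : u0 < u1) (hd : 1 ≤ d1) :
    (S0+S1+d1)*(u0+u1) < (T0+T1+m1)*(2*P) := by
  subst hS
  have := Nat.mul_lt_mul_of_lt_of_le hu (le_refl d1) (by omega : 0 < d1)
  nlinarith

theorem kk (g : Finset α) : ∀ (D U : Finset (Finset α)), IsDown g D → IsUp g U →
    (D ∩ U).card * 2 ^ g.card ≤ D.card * U.card ∧
    ((D ∩ U).card * 2 ^ g.card = D.card * U.card →
      famSize D * U.card ≤ famSize (D ∩ U) * 2 ^ g.card ∧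
      ((∅ : Finset α) ∈ D → (∅ : Finset α) ∉ U → U.Nonempty →
        famSize D * U.card < famSize (D ∩ U) * 2 ^ g.card)) := by
  induction g using Finset.induction_on with
  | empty =>
    intro D U hD hU
    have hD' : D = ∅ ∨ D = {∅} := Finset.subset_singleton_iff.mp
      (fun X hX => Finset.mem_singleton.mpr (Finset.subset_empty.mp (hD.1 X hX)))
    have hU' : U = ∅ ∨ U = {∅} := Finset.subset_singleton_iff.mp
      (fun X hX => Finset.mem_singleton.mpr (Finset.subset_empty.mp (hU.1 X hX)))
    rcases hD' with rfl | rfl <;> rcases hU' with rfl | rfl <;>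
      simp [famSize] <;> intro h <;> simp_all
  | @insert z g hz ih =>
    intro D U hD hU
    have hpow : 2 ^ (insert z g).card = 2 * 2 ^ g.card := by
      rw [Finset.card_insert_of_notMem hz, pow_succ]; ring
    have hD0 : IsDown g (fam0 z D) := down_fam0 hz hD
    have hD1 : IsDown g (fam1 z g D) := down_fam1 hD
    have hU0 : IsUp g (fam0 z U) := up_fam0 hz hU
    have hU1 : IsUp g (fam1 z g U) := up_fam1 hU
    have hDc : D.card = (fam0 z D).card + (fam1 z g D).card := card_decomp z g hz D hD.1
    have hUc : U.card = (fam0 z U).card + (fam1 z g U).card := card_decomp z g hz U hU.1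
    have hDs : famSize D = famSize (fam0 z D) + famSize (fam1 z g D) + (fam1 z g D).card :=
      size_decomp z g hz D hD.1
    have hIg : ∀ X ∈ D ∩ U, X ⊆ insert z g :=
      fun X hX => hD.1 X (Finset.mem_inter.mp hX).1
    have hIc : (D ∩ U).card = (fam0 z D ∩ fam0 z U).card + (fam1 z g D ∩ fam1 z g U).card := by
      have h := card_decomp z g hz (D ∩ U) hIg
      rwa [fam0_inter, fam1_inter] at h
    have hIs : famSize (D ∩ U) = famSize (fam0 z D ∩ fam0 z U)
        + famSize (fam1 z g D ∩ fam1 z g U) + (fam1 z g D ∩ fam1 z g U).card := by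
      have h := size_decomp z g hz (D ∩ U) hIg
      rwa [fam0_inter, fam1_inter] at h
    have hd10 : (fam1 z g D).card ≤ (fam0 z D).card :=
      Finset.card_le_card (fam1_subset_fam0 hz hD)
    have hu01 : (fam0 z U).card ≤ (fam1 z g U).card :=
      Finset.card_le_card (fam0_subset_fam1 hz hU)
    obtain ⟨IH0a, IH0b⟩ := ih (fam0 z D) (fam0 z U) hD0 hU0
    obtain ⟨IH1a, IH1b⟩ := ih (fam1 z g D) (fam1 z g U) hD1 hU1
    have hP1 : (D ∩ U).card * 2 ^ (insert z g).card ≤ D.card * U.card := by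
      rw [hpow, hIc, hDc, hUc, show ((fam0 z D ∩ fam0 z U).card + (fam1 z g D ∩ fam1 z g U).card) *
        (2 * 2 ^ g.card) = ((fam0 z D ∩ fam0 z U).card + (fam1 z g D ∩ fam1 z g U).card) *
        (2 * 2 ^ g.card) from rfl]
      exact nat1 _ _ _ _ _ _ _ IH0a IH1a hd10 hu01
    refine ⟨hP1, ?_⟩
    intro heq
    rw [hpow, hIc, hDc, hUc] at heq
    obtain ⟨e0, e1, hcase⟩ := nat2 _ _ _ _ _ _ _ IH0a IH1a hd10 hu01 heq
    obtain ⟨IH0s, IH0strict⟩ := IH0b e0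
    obtain ⟨IH1s, _⟩ := IH1b e1
    constructor
    · -- weak size inequality
      rw [hpow, hIs, hDs, hUc]
      rcases hcase with hd | hu
      · have hDeq : fam1 z g D = fam0 z D :=
          Finset.eq_of_subset_of_card_le (fam1_subset_fam0 hz hD) (le_of_eq hd)
        have hSeq : famSize (fam1 z g D) = famSize (fam0 z D) := by rw [hDeq]
        exact nat4 _ _ _ _ _ _ _ _ _ IH0s IH1s e1 hSeq hu01
      · exact nat3 _ _ _ _ _ _ _ _ _ IH0s IH1s e1 hu
    · -- strict size inequality
      intro hemptyD hemptyU hUne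
      rw [hpow, hIs, hDs, hUc]
      have hU1card : 1 ≤ (fam0 z U).card + (fam1 z g U).card := by
        rw [← hUc]; exact Finset.card_pos.mpr hUne
      rcases eq_or_lt_of_le hu01 with hu | hu
      · -- u0 = u1 : use strict IH on the 0-side
        have hu0pos : 0 < (fam0 z U).card := by omega
        have hED0 : (∅ : Finset α) ∈ fam0 z D :=
          mem_fam0.mpr ⟨hemptyD, Finset.notMem_empty z⟩
        have hEU0 : (∅ : Finset α) ∉ fam0 z U :=
          fun h => hemptyU (mem_fam0.mp h).1
        have hU0ne : (fam0 z U).Nonempty := Finset.card_pos.mp hu0pos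
        have hstrict := IH0strict hED0 hEU0 hU0ne
        exact nat5 _ _ _ _ _ _ _ _ _ hstrict IH1s e1 hu
      · -- u0 < u1 : then d0 = d1
        have hd : (fam0 z D).card = (fam1 z g D).card := by
          rcases hcase with h | h
          · exact h
          · omega
        have hDeq : fam1 z g D = fam0 z D :=
          Finset.eq_of_subset_of_card_le (fam1_subset_fam0 hz hD) (le_of_eq hd)
        have hSeq : famSize (fam1 z g D) = famSize (fam0 z D) := by rw [hDeq]
        have hd1pos : 1 ≤ (fam1 z g D).card := by
          rw [hDeq]
          exact Finset.card_pos.mpr ⟨∅, mem_fam0.mpr ⟨hemptyD, Finset.notMem_empty z⟩⟩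
        exact nat6 _ _ _ _ _ _ _ _ _ IH0s IH1s e1 hSeq hu hd1pos


lemma nat7e (d a b u : ℕ) (i5 : d ≤ a + b) (hu : 0 < u)
    (htot : d*u ≥ (a+b)*u) : d = a + b := by
  by_contra hne
  have hlt : d < a + b := lt_of_le_of_ne i5 hne
  have := Nat.mul_lt_mul_of_lt_of_le hlt (le_refl u) hu
  omega

lemma nat8 (SA SB SD SE u v Pg : ℕ) (h1 : SD*u < SA*Pg) (h2 : SE*v ≤ SB*Pg)
    (h3 : SA+SB ≤ SD) (h4 : SA+SB ≤ SE) (h7 : u + v = Pg) : False := by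
  have k3 := Nat.mul_le_mul_right u h3
  have k4 := Nat.mul_le_mul_right v h4
  nlinarith

theorem cross (g : Finset α) (D E A B : Finset (Finset α))
    (hD : IsDown g D) (hE : IsDown g E) (hAD : A ⊆ D) (hBE : B ⊆ E)
    (hA : A.Nonempty) (hB : B.Nonempty)
    (hcross : ∀ X ∈ A, ∀ Y ∈ B, (X ∩ Y).Nonempty) :
    (A.card + B.card < D.card ∨
      (A.card + B.card = D.card ∧ famSize D < famSize A + famSize B)) ∨
    (A.card + B.card < E.card ∨
      (A.card + B.card = E.card ∧ famSize E < famSize A + famSize B)) := by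
  classical
  set U : Finset (Finset α) := g.powerset.filter (fun X => ∃ A' ∈ A, A' ⊆ X) with hUdef
  set V : Finset (Finset α) := g.powerset.filter (fun X => ∀ A' ∈ A, (X ∩ A').Nonempty)
    with hVdef
  have hUmem : ∀ {X : Finset α}, X ∈ U ↔ X ⊆ g ∧ ∃ A' ∈ A, A' ⊆ X := by
    intro X; simp [hUdef]
  have hVmem : ∀ {X : Finset α}, X ∈ V ↔ X ⊆ g ∧ ∀ A' ∈ A, (X ∩ A').Nonempty := by
    intro X; simp [hVdef]
  have hUup : IsUp g U := by
    constructor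
    · intro X hX; exact (hUmem.mp hX).1
    · intro X hX Y hXY hYg
      obtain ⟨hXg, A', hA', hsub⟩ := hUmem.mp hX
      exact hUmem.mpr ⟨hYg, A', hA', hsub.trans hXY⟩
  have hVup : IsUp g V := by
    constructor
    · intro X hX; exact (hVmem.mp hX).1
    · intro X hX Y hXY hYg
      obtain ⟨hXg, hall⟩ := hVmem.mp hX
      refine hVmem.mpr ⟨hYg, fun A' hA' => ?_⟩
      obtain ⟨t, ht⟩ := hall A' hA'
      rw [Finset.mem_inter] at ht
      exact ⟨t, Finset.mem_inter.mpr ⟨hXY ht.1, ht.2⟩⟩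
  have hAsubg : ∀ X ∈ A, X ⊆ g := fun X hX => hD.1 X (hAD hX)
  have hAU : A ⊆ D ∩ U := by
    intro X hX
    rw [Finset.mem_inter]
    exact ⟨hAD hX, hUmem.mpr ⟨hAsubg X hX, X, hX, Finset.Subset.refl X⟩⟩
  have hBV : B ⊆ E ∩ V := by
    intro Y hY
    rw [Finset.mem_inter]
    refine ⟨hBE hY, hVmem.mpr ⟨hE.1 Y (hBE hY), fun A' hA' => ?_⟩⟩
    obtain ⟨t, ht⟩ := hcross A' hA' Y hY
    rw [Finset.mem_inter] at ht
    exact ⟨t, Finset.mem_inter.mpr ⟨ht.2, ht.1⟩⟩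
  -- complementation:  V = complements of non-members of U
  have hkey : ∀ X ∈ g.powerset, (X ∈ V ↔ g \ X ∉ U) := by
    intro X hX
    rw [Finset.mem_powerset] at hX
    constructor
    · intro hXV hcon
      obtain ⟨_, A', hA', hsub⟩ := hUmem.mp hcon
      obtain ⟨t, ht⟩ := (hVmem.mp hXV).2 A' hA'
      rw [Finset.mem_inter] at ht
      exact (Finset.mem_sdiff.mp (hsub ht.2)).2 ht.1
    · intro hcon
      refine hVmem.mpr ⟨hX, fun A' hA' => ?_⟩
      by_contra hempty
      rw [Finset.not_nonempty_iff_eq_empty] at hempty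
      refine hcon (hUmem.mpr ⟨Finset.sdiff_subset, A', hA', fun t ht => ?_⟩)
      rw [Finset.mem_sdiff]
      refine ⟨hAsubg A' hA' ht, fun htX => ?_⟩
      have : t ∈ X ∩ A' := Finset.mem_inter.mpr ⟨htX, ht⟩
      simp [hempty] at this
  have hUV : U.card + V.card = 2 ^ g.card := by
    have hbij : V.card = (g.powerset \ U).card := by
      refine Finset.card_bij' (fun X _ => g \ X) (fun X _ => g \ X) ?_ ?_ ?_ ?_
      · intro X hXV
        have hXp : X ∈ g.powerset := Finset.mem_powerset.mpr (hVup.1 X hXV)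
        rw [Finset.mem_sdiff]
        exact ⟨Finset.mem_powerset.mpr Finset.sdiff_subset, (hkey X hXp).mp hXV⟩
      · intro X hXs
        rw [Finset.mem_sdiff] at hXs
        have hXg : X ⊆ g := Finset.mem_powerset.mp hXs.1
        have hgX : g \ X ∈ g.powerset := Finset.mem_powerset.mpr Finset.sdiff_subset
        refine (hkey (g \ X) hgX).mpr ?_
        rw [Finset.sdiff_sdiff_eq_self hXg]
        exact hXs.2
      · intro X hXV
        exact Finset.sdiff_sdiff_eq_self (hVup.1 X hXV)
      · intro X hXs
        rw [Finset.mem_sdiff] at hXs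
        exact Finset.sdiff_sdiff_eq_self (Finset.mem_powerset.mp hXs.1)
    have hUp : U ⊆ g.powerset := Finset.filter_subset _ _
    have h1 : (g.powerset \ U).card = g.powerset.card - U.card := Finset.card_sdiff_of_subset hUp
    have h2 : U.card ≤ g.powerset.card := Finset.card_le_card hUp
    rw [hbij, h1, Finset.card_powerset]
    rw [Finset.card_powerset] at h2
    omega
  obtain ⟨A0, hA0⟩ := hA
  obtain ⟨B0, hB0⟩ := hB
  have hUne : U.Nonempty := ⟨A0, (Finset.mem_inter.mp (hAU hA0)).2⟩
  have hVne : V.Nonempty := ⟨B0, (Finset.mem_inter.mp (hBV hB0)).2⟩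
  have hUe : (∅ : Finset α) ∉ U := by
    intro h
    obtain ⟨_, A', hA', hsub⟩ := hUmem.mp h
    have hA'e : A' = ∅ := Finset.subset_empty.mp hsub
    obtain ⟨t, ht⟩ := hcross A' hA' B0 hB0
    rw [hA'e] at ht
    simp at ht
  have hVe : (∅ : Finset α) ∉ V := by
    intro h
    obtain ⟨t, ht⟩ := (hVmem.mp h).2 A0 hA0
    simp at ht
  have hDe : (∅ : Finset α) ∈ D := hD.2 A0 (hAD hA0) ∅ (Finset.empty_subset A0)
  have hEe : (∅ : Finset α) ∈ E := hE.2 B0 (hBE hB0) ∅ (Finset.empty_subset B0)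
  obtain ⟨kd1, kd2⟩ := kk g D U hD hUup
  obtain ⟨ke1, ke2⟩ := kk g E V hE hVup
  by_contra hcon
  push_neg at hcon
  obtain ⟨⟨hDle, hDimp⟩, ⟨hEle, hEimp⟩⟩ := hcon
  have hPg : 0 < 2 ^ g.card := by positivity
  have hupos : 0 < U.card := Finset.card_pos.mpr hUne
  have hvpos : 0 < V.card := Finset.card_pos.mpr hVne
  have i1 : A.card ≤ (D ∩ U).card := Finset.card_le_card hAU
  have i2 : B.card ≤ (E ∩ V).card := Finset.card_le_card hBV
  -- chain of inequalities, all must be tight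
  have htot : (A.card + B.card) * 2 ^ g.card
      ≤ D.card * U.card + E.card * V.card := by
    calc (A.card + B.card) * 2 ^ g.card
        ≤ ((D ∩ U).card + (E ∩ V).card) * 2 ^ g.card :=
          Nat.mul_le_mul_right _ (by omega)
      _ = (D ∩ U).card * 2 ^ g.card + (E ∩ V).card * 2 ^ g.card := by ring
      _ ≤ D.card * U.card + E.card * V.card := add_le_add kd1 ke1
  have hback : D.card * U.card + E.card * V.card ≤ (A.card + B.card) * 2 ^ g.card := by
    calc D.card * U.card + E.card * V.card
        ≤ (A.card + B.card) * U.card + (A.card + B.card) * V.card :=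
          add_le_add (Nat.mul_le_mul_right _ hDle) (Nat.mul_le_mul_right _ hEle)
      _ = (A.card + B.card) * (U.card + V.card) := by ring
      _ = (A.card + B.card) * 2 ^ g.card := by rw [hUV]
  have hDeq : D.card = A.card + B.card := by
    refine nat7e _ _ _ U.card hDle ?_ ?_
    · exact hupos
    · nlinarith [Nat.mul_le_mul_right V.card hEle]
  have hEeq : E.card = A.card + B.card := by
    refine nat7e _ _ _ V.card hEle ?_ ?_
    · exact hvpos
    · nlinarith [Nat.mul_le_mul_right U.card hDle]
  have hcards : (A.card + B.card) * 2 ^ g.card = D.card * U.card + E.card * V.card :=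
    le_antisymm htot hback
  have e12 : A.card = (D ∩ U).card ∧ B.card = (E ∩ V).card := by
    have h : ((D ∩ U).card + (E ∩ V).card) * 2 ^ g.card
        ≤ D.card * U.card + E.card * V.card := by
      calc ((D ∩ U).card + (E ∩ V).card) * 2 ^ g.card
          = (D ∩ U).card * 2 ^ g.card + (E ∩ V).card * 2 ^ g.card := by ring
        _ ≤ D.card * U.card + E.card * V.card := add_le_add kd1 ke1
    have h2 : (A.card + B.card) * 2 ^ g.card
        ≤ ((D ∩ U).card + (E ∩ V).card) * 2 ^ g.card :=
      Nat.mul_le_mul_right _ (by omega)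
    have h3 : A.card + B.card = (D ∩ U).card + (E ∩ V).card := by
      have := Nat.le_of_mul_le_mul_right (le_trans h (le_of_eq hcards.symm)) hPg
      omega
    omega
  obtain ⟨eA, eB⟩ := e12
  have hAeq : A = D ∩ U := Finset.eq_of_subset_of_card_le hAU (le_of_eq eA.symm)
  have hBeq : B = E ∩ V := Finset.eq_of_subset_of_card_le hBV (le_of_eq eB.symm)
  have e3 : (D ∩ U).card * 2 ^ g.card = D.card * U.card := by
    have l1 : (D ∩ U).card * 2 ^ g.card ≤ D.card * U.card := kd1
    have l2 : (E ∩ V).card * 2 ^ g.card ≤ E.card * V.card := ke1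
    have : (D ∩ U).card * 2 ^ g.card + (E ∩ V).card * 2 ^ g.card
        = D.card * U.card + E.card * V.card := by
      rw [← eA, ← eB]
      calc A.card * 2 ^ g.card + B.card * 2 ^ g.card
          = (A.card + B.card) * 2 ^ g.card := by ring
        _ = D.card * U.card + E.card * V.card := hcards
    omega
  have e4 : (E ∩ V).card * 2 ^ g.card = E.card * V.card := by
    have l1 : (D ∩ U).card * 2 ^ g.card ≤ D.card * U.card := kd1
    have : (D ∩ U).card * 2 ^ g.card + (E ∩ V).card * 2 ^ g.card
        = D.card * U.card + E.card * V.card := by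
      rw [← eA, ← eB]
      calc A.card * 2 ^ g.card + B.card * 2 ^ g.card
          = (A.card + B.card) * 2 ^ g.card := by ring
        _ = D.card * U.card + E.card * V.card := hcards
    omega
  obtain ⟨_, strictD⟩ := kd2 e3
  obtain ⟨weakE, _⟩ := ke2 e4
  have hstr : famSize D * U.card < famSize A * 2 ^ g.card := by
    rw [hAeq]; exact strictD hDe hUe hUne
  have hwk : famSize E * V.card ≤ famSize B * 2 ^ g.card := by
    rw [hBeq]; exact weakE
  have hSD : famSize A + famSize B ≤ famSize D := hDimp hDeq.symm
  have hSE : famSize A + famSize B ≤ famSize E := hEimp hEeq.symm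
  exact nat8 (famSize A) (famSize B) (famSize D) (famSize E) U.card V.card (2 ^ g.card)
    hstr hwk hSD hSE hUV


lemma mem_downset {F : Finset (Finset α)} {X : Finset α} :
    X ∈ F.biUnion Finset.powerset ↔ ∃ B ∈ F, X ⊆ B := by
  simp [Finset.mem_biUnion, Finset.mem_powerset]

lemma self_mem_downset {F : Finset (Finset α)} {X : Finset α} (hX : X ∈ F) :
    X ∈ F.biUnion Finset.powerset :=
  mem_downset.mpr ⟨X, hX, Finset.Subset.refl X⟩

lemma card_image_erase (a : α) (G : Finset (Finset α)) (hG : ∀ X ∈ G, a ∈ X) :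
    (G.image (fun X => X.erase a)).card = G.card :=
  Finset.card_image_of_injOn (fun X hX Y hY h => by
    rw [← Finset.insert_erase (hG X hX), h, Finset.insert_erase (hG Y hY)])

lemma famSize_image_erase (a : α) (G : Finset (Finset α)) (hG : ∀ X ∈ G, a ∈ X) :
    famSize G = famSize (G.image (fun X => X.erase a)) + G.card := by
  have h1 : ∑ Y ∈ G.image (fun X => X.erase a), Y.card = ∑ X ∈ G, (X.erase a).card :=
    Finset.sum_image (fun X hX Y hY h => by
      rw [← Finset.insert_erase (hG X hX), h, Finset.insert_erase (hG Y hY)])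
  have h2 : famSize G = ∑ X ∈ G, ((X.erase a).card + 1) := by
    unfold famSize
    refine Finset.sum_congr rfl (fun X hX => ?_)
    rw [Finset.card_erase_of_mem (hG X hX)]
    have : 1 ≤ X.card := Finset.card_pos.mpr ⟨a, hG X hX⟩
    omega
  rw [h2, Finset.sum_add_distrib, Finset.sum_const, smul_eq_mul, mul_one]
  unfold famSize
  rw [h1]

lemma split_card (a b : α) (G : Finset (Finset α)) (hG : ∀ X ∈ G, a ∈ X ∨ b ∈ X) :
    G.card = (G.filter (fun X => a ∈ X ∧ b ∉ X)).card
      + (G.filter (fun X => b ∈ X ∧ a ∉ X)).card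
      + (G.filter (fun X => a ∈ X ∧ b ∈ X)).card := by
  have h1 := Finset.card_filter_add_card_filter_not (s := G)
    (p := fun X => a ∈ X)
  have h2 := Finset.card_filter_add_card_filter_not
    (s := G.filter (fun X => a ∈ X)) (p := fun X => b ∈ X)
  rw [Finset.filter_filter, Finset.filter_filter] at h2
  have h3 : G.filter (fun X => ¬ a ∈ X) = G.filter (fun X => b ∈ X ∧ a ∉ X) := by
    refine Finset.filter_congr (fun X hX => ?_)
    rcases hG X hX with h | h <;> simp [h] <;> tauto
  have h4 : (G.filter (fun X => a ∈ X ∧ ¬ b ∈ X)).card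
      = (G.filter (fun X => a ∈ X ∧ b ∉ X)).card := rfl
  have h5 : (G.filter (fun X => a ∈ X ∧ b ∈ X)).card
      = (G.filter (fun X => a ∈ X ∧ b ∈ X)).card := rfl
  rw [h3] at h1
  omega

lemma split_size (a b : α) (G : Finset (Finset α)) (hG : ∀ X ∈ G, a ∈ X ∨ b ∈ X) :
    famSize G = famSize (G.filter (fun X => a ∈ X ∧ b ∉ X))
      + famSize (G.filter (fun X => b ∈ X ∧ a ∉ X))
      + famSize (G.filter (fun X => a ∈ X ∧ b ∈ X)) := by
  unfold famSize
  have h1 := Finset.sum_filter_add_sum_filter_not G (fun X => a ∈ X)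
    (fun X => X.card)
  have h2 := Finset.sum_filter_add_sum_filter_not (G.filter (fun X => a ∈ X))
    (fun X => b ∈ X) (fun X => X.card)
  rw [Finset.filter_filter, Finset.filter_filter] at h2
  have h3 : G.filter (fun X => ¬ a ∈ X) = G.filter (fun X => b ∈ X ∧ a ∉ X) := by
    refine Finset.filter_congr (fun X hX => ?_)
    rcases hG X hX with h | h <;> simp [h] <;> tauto
  rw [h3] at h1
  omega

lemma star_good (F : Finset (Finset α)) (a b : α)
    (hF : ∀ A ∈ F, ∀ B ∈ F, (A ∩ B).Nonempty)
    (hab : ∀ B ∈ F, a ∈ B ∨ b ∈ B)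
    (hgood : (F.filter (fun X => a ∈ X ∧ b ∉ X)).card
        + (F.filter (fun X => b ∈ X ∧ a ∉ X)).card
        < ((F.biUnion Finset.powerset).filter (fun X => a ∈ X ∧ b ∉ X)).card ∨
      ((F.filter (fun X => a ∈ X ∧ b ∉ X)).card
          + (F.filter (fun X => b ∈ X ∧ a ∉ X)).card
        = ((F.biUnion Finset.powerset).filter (fun X => a ∈ X ∧ b ∉ X)).card ∧
        famSize ((F.biUnion Finset.powerset).filter (fun X => a ∈ X ∧ b ∉ X))
          < famSize (F.filter (fun X => a ∈ X ∧ b ∉ X))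
            + famSize (F.filter (fun X => b ∈ X ∧ a ∉ X)))) :
    ∃ F' : Finset (Finset α), F' ⊆ F.biUnion Finset.powerset ∧
      (∀ A ∈ F', ∀ B ∈ F', (A ∩ B).Nonempty) ∧
      (∀ B ∈ F', a ∈ B ∨ b ∈ B) ∧
      (F.card < F'.card ∨
        (F'.card = F.card ∧ ∑ B ∈ F', B.card < ∑ B ∈ F, B.card)) := by
  classical
  set C := F.biUnion Finset.powerset with hC
  refine ⟨C.filter (fun X => a ∈ X), Finset.filter_subset _ _, ?_, ?_, ?_⟩
  · intro X hX Y hY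
    exact ⟨a, Finset.mem_inter.mpr ⟨(Finset.mem_filter.mp hX).2,
      (Finset.mem_filter.mp hY).2⟩⟩
  · intro X hX
    exact Or.inl (Finset.mem_filter.mp hX).2
  · -- the counting
    have hCab : ∀ X ∈ C.filter (fun X => a ∈ X), a ∈ X ∨ b ∈ X :=
      fun X hX => Or.inl (Finset.mem_filter.mp hX).2
    have hsc := split_card a b (C.filter (fun X => a ∈ X)) hCab
    have hss := split_size a b (C.filter (fun X => a ∈ X)) hCab
    rw [Finset.filter_filter, Finset.filter_filter, Finset.filter_filter] at hsc hss
    have hfc1 : (C.filter (fun X => a ∈ X ∧ (a ∈ X ∧ b ∉ X)))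
        = C.filter (fun X => a ∈ X ∧ b ∉ X) := by
      refine Finset.filter_congr (fun X hX => ?_); tauto
    have hfc2 : (C.filter (fun X => a ∈ X ∧ (b ∈ X ∧ a ∉ X)))
        = (∅ : Finset (Finset α)) := by
      rw [Finset.filter_eq_empty_iff]; tauto
    have hfc3 : (C.filter (fun X => a ∈ X ∧ (a ∈ X ∧ b ∈ X)))
        = C.filter (fun X => a ∈ X ∧ b ∈ X) := by
      refine Finset.filter_congr (fun X hX => ?_); tauto
    rw [hfc1, hfc2, hfc3] at hsc hss
    have hfe : famSize (∅ : Finset (Finset α)) = 0 := by simp [famSize]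
    rw [hfe] at hss
    rw [Finset.card_empty] at hsc
    -- F splits
    have hfc := split_card a b F hab
    have hfs := split_size a b F hab
    -- subsets
    have hsubab : F.filter (fun X => a ∈ X ∧ b ∈ X)
        ⊆ C.filter (fun X => a ∈ X ∧ b ∈ X) := by
      intro X hX
      rw [Finset.mem_filter] at hX ⊢
      exact ⟨self_mem_downset hX.1, hX.2⟩
    have hcab := Finset.card_le_card hsubab
    rcases hgood with hlt | ⟨heq, hsize⟩
    · left
      omega
    · rcases lt_or_eq_of_le hcab with hlt | heqab
      · left; omega
      · right
        have habeq : F.filter (fun X => a ∈ X ∧ b ∈ X)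
            = C.filter (fun X => a ∈ X ∧ b ∈ X) :=
          Finset.eq_of_subset_of_card_le hsubab (le_of_eq heqab.symm)
        have hsabeq : famSize (F.filter (fun X => a ∈ X ∧ b ∈ X))
            = famSize (C.filter (fun X => a ∈ X ∧ b ∈ X)) := by rw [habeq]
        constructor
        · omega
        · have h1 : ∑ B ∈ C.filter (fun X => a ∈ X), B.card
              = famSize (C.filter (fun X => a ∈ X)) := rfl
          have h2 : ∑ B ∈ F, B.card = famSize F := rfl
          omega


end Stmt2Aux

open Stmt2Aux

/-- If an intersecting family `F` lies in the union of the stars of `a` and `b` of the downset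
`C` it generates, but in neither single star, then there is an intersecting family
`F' ⊆ C`, still contained in the union of the two stars, which is either strictly larger,
or of the same size with strictly smaller total size of members. -/
theorem stmt_2 {α : Type*} [DecidableEq α] (F : Finset (Finset α)) (a b : α)
    (hF : ∀ A ∈ F, ∀ B ∈ F, (A ∩ B).Nonempty)
    (hab : ∀ B ∈ F, a ∈ B ∨ b ∈ B)
    (hna : ∃ B ∈ F, a ∉ B) (hnb : ∃ B ∈ F, b ∉ B) :
    let C : Finset (Finset α) := F.biUnion Finset.powerset
    ∃ F' : Finset (Finset α), F' ⊆ C ∧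
      (∀ A ∈ F', ∀ B ∈ F', (A ∩ B).Nonempty) ∧
      (∀ B ∈ F', a ∈ B ∨ b ∈ B) ∧
      (F.card < F'.card ∨
        (F'.card = F.card ∧ ∑ B ∈ F', B.card < ∑ B ∈ F, B.card)) := by
  classical
  intro C
  have hne : a ≠ b := by
    rintro rfl
    obtain ⟨B0, hB0, hnB0⟩ := hna
    rcases hab B0 hB0 with h | h <;> exact hnB0 h
  have hCmem : ∀ X : Finset α, X ∈ C ↔ ∃ B' ∈ F, X ⊆ B' := fun X => mem_downset
  -- the filter pieces
  set Fa := F.filter (fun X => a ∈ X ∧ b ∉ X) with hFadef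
  set Fb := F.filter (fun X => b ∈ X ∧ a ∉ X) with hFbdef
  set Ca := C.filter (fun X => a ∈ X ∧ b ∉ X) with hCadef
  set Cb := C.filter (fun X => b ∈ X ∧ a ∉ X) with hCbdef
  set g : Finset α := ((F.sup id).erase a).erase b with hgdef
  set D := Ca.image (fun X => X.erase a) with hDdef
  set E := Cb.image (fun X => X.erase b) with hEdef
  set 𝓐 := Fa.image (fun X => X.erase a) with h𝓐def
  set 𝓑 := Fb.image (fun X => X.erase b) with h𝓑def
  have hmemg : ∀ t : α, t ∈ g ↔ t ≠ b ∧ t ≠ a ∧ t ∈ F.sup id := by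
    intro t
    rw [hgdef, Finset.mem_erase, Finset.mem_erase]
  have hCsup : ∀ X ∈ C, X ⊆ F.sup id := by
    intro X hX
    obtain ⟨B', hB', hsub⟩ := (hCmem X).mp hX
    exact hsub.trans (Finset.le_sup (f := id) hB')
  -- downset structure on side a
  have hDdown : IsDown g D := by
    constructor
    · intro X hX
      obtain ⟨Z, hZ, rfl⟩ := Finset.mem_image.mp hX
      rw [hCadef, Finset.mem_filter] at hZ
      intro t ht
      have htZ := Finset.mem_of_mem_erase ht
      have htna : t ≠ a := Finset.ne_of_mem_erase ht
      rw [hmemg]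
      exact ⟨fun hh => hZ.2.2 (hh ▸ htZ), htna, hCsup Z hZ.1 htZ⟩
    · intro X hX Y hYX
      obtain ⟨Z, hZ, rfl⟩ := Finset.mem_image.mp hX
      rw [hCadef, Finset.mem_filter] at hZ
      have haY : a ∉ Y := fun h => Finset.notMem_erase a Z (hYX h)
      have hins : insert a Y ∈ Ca := by
        rw [hCadef, Finset.mem_filter]
        refine ⟨?_, Finset.mem_insert_self a Y, ?_⟩
        · obtain ⟨B', hB', hsub⟩ := (hCmem Z).mp hZ.1
          refine (hCmem (insert a Y)).mpr ⟨B', hB', ?_⟩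
          rw [Finset.insert_subset_iff]
          exact ⟨hsub hZ.2.1,
            (hYX.trans (Finset.erase_subset a Z)).trans hsub⟩
        · rw [Finset.mem_insert]
          rintro (h | h)
          · exact hne h.symm
          · exact hZ.2.2 (Finset.mem_of_mem_erase (hYX h))
      rw [hDdef]
      exact Finset.mem_image.mpr ⟨insert a Y, hins, Finset.erase_insert haY⟩
  have hEdown : IsDown g E := by
    constructor
    · intro X hX
      obtain ⟨Z, hZ, rfl⟩ := Finset.mem_image.mp hX
      rw [hCbdef, Finset.mem_filter] at hZ
      intro t ht
      have htZ := Finset.mem_of_mem_erase ht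
      have htnb : t ≠ b := Finset.ne_of_mem_erase ht
      rw [hmemg]
      exact ⟨htnb, fun hh => hZ.2.2 (hh ▸ htZ), hCsup Z hZ.1 htZ⟩
    · intro X hX Y hYX
      obtain ⟨Z, hZ, rfl⟩ := Finset.mem_image.mp hX
      rw [hCbdef, Finset.mem_filter] at hZ
      have hbY : b ∉ Y := fun h => Finset.notMem_erase b Z (hYX h)
      have hins : insert b Y ∈ Cb := by
        rw [hCbdef, Finset.mem_filter]
        refine ⟨?_, Finset.mem_insert_self b Y, ?_⟩
        · obtain ⟨B', hB', hsub⟩ := (hCmem Z).mp hZ.1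
          refine (hCmem (insert b Y)).mpr ⟨B', hB', ?_⟩
          rw [Finset.insert_subset_iff]
          exact ⟨hsub hZ.2.1,
            (hYX.trans (Finset.erase_subset b Z)).trans hsub⟩
        · rw [Finset.mem_insert]
          rintro (h | h)
          · exact hne h
          · exact hZ.2.2 (Finset.mem_of_mem_erase (hYX h))
      rw [hEdef]
      exact Finset.mem_image.mpr ⟨insert b Y, hins, Finset.erase_insert hbY⟩
  have hFaCa : Fa ⊆ Ca := by
    intro X hX
    rw [hFadef, Finset.mem_filter] at hX
    rw [hCadef, Finset.mem_filter]
    exact ⟨self_mem_downset hX.1, hX.2⟩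
  have hFbCb : Fb ⊆ Cb := by
    intro X hX
    rw [hFbdef, Finset.mem_filter] at hX
    rw [hCbdef, Finset.mem_filter]
    exact ⟨self_mem_downset hX.1, hX.2⟩
  have h𝓐D : 𝓐 ⊆ D := Finset.image_subset_image hFaCa
  have h𝓑E : 𝓑 ⊆ E := Finset.image_subset_image hFbCb
  have hFane : Fa.Nonempty := by
    obtain ⟨B0, hB0, hnB0⟩ := hnb
    have : a ∈ B0 := (hab B0 hB0).resolve_right (fun h => hnB0 h)
    exact ⟨B0, by rw [hFadef, Finset.mem_filter]; exact ⟨hB0, this, hnB0⟩⟩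
  have hFbne : Fb.Nonempty := by
    obtain ⟨B0, hB0, hnB0⟩ := hna
    have : b ∈ B0 := (hab B0 hB0).resolve_left (fun h => hnB0 h)
    exact ⟨B0, by rw [hFbdef, Finset.mem_filter]; exact ⟨hB0, this, hnB0⟩⟩
  have h𝓐ne : 𝓐.Nonempty := hFane.image _
  have h𝓑ne : 𝓑.Nonempty := hFbne.image _
  have hcrossAB : ∀ X ∈ 𝓐, ∀ Y ∈ 𝓑, (X ∩ Y).Nonempty := by
    intro X hX Y hY
    obtain ⟨Z, hZ, rfl⟩ := Finset.mem_image.mp hX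
    obtain ⟨W, hW, rfl⟩ := Finset.mem_image.mp hY
    rw [hFadef, Finset.mem_filter] at hZ
    rw [hFbdef, Finset.mem_filter] at hW
    obtain ⟨t, ht⟩ := hF Z hZ.1 W hW.1
    rw [Finset.mem_inter] at ht
    have htna : t ≠ a := fun h => hW.2.2 (h ▸ ht.2)
    have htnb : t ≠ b := fun h => hZ.2.2 (h ▸ ht.1)
    exact ⟨t, Finset.mem_inter.mpr ⟨Finset.mem_erase.mpr ⟨htna, ht.1⟩,
      Finset.mem_erase.mpr ⟨htnb, ht.2⟩⟩⟩
  -- translation facts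
  have hamem : ∀ X ∈ Fa, a ∈ X := by
    intro X hX; rw [hFadef, Finset.mem_filter] at hX; exact hX.2.1
  have hbmem : ∀ X ∈ Fb, b ∈ X := by
    intro X hX; rw [hFbdef, Finset.mem_filter] at hX; exact hX.2.1
  have haCmem : ∀ X ∈ Ca, a ∈ X := by
    intro X hX; rw [hCadef, Finset.mem_filter] at hX; exact hX.2.1
  have hbCmem : ∀ X ∈ Cb, b ∈ X := by
    intro X hX; rw [hCbdef, Finset.mem_filter] at hX; exact hX.2.1
  have hc1 : 𝓐.card = Fa.card := card_image_erase a Fa hamem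
  have hc2 : 𝓑.card = Fb.card := card_image_erase b Fb hbmem
  have hc3 : D.card = Ca.card := card_image_erase a Ca haCmem
  have hc4 : E.card = Cb.card := card_image_erase b Cb hbCmem
  have hs1 : famSize Fa = famSize 𝓐 + Fa.card := famSize_image_erase a Fa hamem
  have hs2 : famSize Fb = famSize 𝓑 + Fb.card := famSize_image_erase b Fb hbmem
  have hs3 : famSize Ca = famSize D + Ca.card := famSize_image_erase a Ca haCmem
  have hs4 : famSize Cb = famSize E + Cb.card := famSize_image_erase b Cb hbCmem
  obtain hg1 | hg2 := cross g D E 𝓐 𝓑 hDdown hEdown h𝓐D h𝓑E h𝓐ne h𝓑ne hcrossAB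
  · -- side a
    have hgood : Fa.card + Fb.card < Ca.card ∨
        (Fa.card + Fb.card = Ca.card ∧ famSize Ca < famSize Fa + famSize Fb) := by
      rcases hg1 with h | ⟨h1, h2⟩
      · left; omega
      · right; omega
    exact star_good F a b hF hab hgood
  · -- side b
    have hgood : Fb.card + Fa.card < Cb.card ∨
        (Fb.card + Fa.card = Cb.card ∧ famSize Cb < famSize Fb + famSize Fa) := by
      rcases hg2 with h | ⟨h1, h2⟩
      · left; omega
      · right; omega
    obtain ⟨F', hf1, hf2, hf3, hf4⟩ :=
      star_good F b a hF (fun B hB => (hab B hB).symm) hgood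
    exact ⟨F', hf1, hf2, fun B hB => (hf3 B hB).symm, hf4⟩
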